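/- Let ρ_d > 0, b > 0, let ω : [0, ∞) → (0, ∞) be continuous, bounded, strictly decreasing to 0, and let α : [0,1] × [0, ∞) → (0, ∞) be continuous, bounded, and for each x ∈ [0,1] strictly decreasing to 0 in its second argument. Then the Approximation 3 system admits a nonzero steady state, and this steady state is unique, if and only if ∫₀¹ α(x, 0)·exp( (1/ρ_d)·∫₀ˣ (b − α(y, 0)) dy ) dx > ρ_d, equivalently ∫₀¹ exp( (1/ρ_d)·∫ₓ¹ (α(y, 0) − b) dy ) dx > ρ_d/b. Otherwise, zero is the only steady state. -/

import Mathlib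

open Real Set Filter

/-- The exponent `u(x, A) = (1/ρ) ∫₀ˣ (b − α(y, A)) dy` appearing in the steady-state
profile of the Approximation 3 system. -/
noncomputable def uExp (ρ b : ℝ) (α : ℝ → ℝ → ℝ) (A x : ℝ) : ℝ :=
  (1 / ρ) * ∫ y in (0 : ℝ)..x, (b - α y A)

/-- A nonzero steady state of the Approximation 3 system, expressed via the reduced
algebraic system for `(A*, Ω*(0))`: the profile is
`Ω*(x) = Ω*(0) exp(u(x, A*))`, with `ρ = ∫₀¹ α(x, A*) exp(u(x, A*)) dx` and
`ρ Ω*(0) = ω(Ω̄) A*` where `Ω̄ = Ω*(0) ∫₀¹ exp(u(x, A*)) dx`. -/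
def IsNonzeroSteadyState3 (ρ b : ℝ) (α : ℝ → ℝ → ℝ) (ω : ℝ → ℝ)
    (A Ω0 : ℝ) : Prop :=
  0 < A ∧ 0 < Ω0 ∧
  ρ = (∫ x in (0 : ℝ)..1, α x A * Real.exp (uExp ρ b α A x)) ∧
  ρ * Ω0 = ω (Ω0 * ∫ x in (0 : ℝ)..1, Real.exp (uExp ρ b α A x)) * A

/-! ### Auxiliary functions for the steady-state analysis -/

/-- The exponent of the second ("tail") form of the steady-state profile. -/
noncomputable def Gin (ρ b : ℝ) (β : ℝ → ℝ → ℝ) (A x : ℝ) : ℝ :=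
  (1 / ρ) * ∫ y in x..(1:ℝ), (β y A - b)

noncomputable def Gfun (ρ b : ℝ) (β : ℝ → ℝ → ℝ) (A : ℝ) : ℝ :=
  ∫ x in (0:ℝ)..1, Real.exp (Gin ρ b β A x)

noncomputable def Ffun (ρ b : ℝ) (β : ℝ → ℝ → ℝ) (A : ℝ) : ℝ :=
  ∫ x in (0:ℝ)..1, β x A * Real.exp (uExp ρ b β A x)

noncomputable def Hfun (ρ b : ℝ) (β : ℝ → ℝ → ℝ) (A : ℝ) : ℝ :=
  ∫ x in (0:ℝ)..1, Real.exp (uExp ρ b β A x)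

section aux
variable {ρ b : ℝ} {β : ℝ → ℝ → ℝ}

lemma uExp_hasDerivAt (hρ : 0 < ρ) (hβc : Continuous fun p : ℝ × ℝ => β p.1 p.2) (A x : ℝ) :
    HasDerivAt (uExp ρ b β A) ((1 / ρ) * (b - β x A)) x := by
  have hf : Continuous fun y => b - β y A := by
    have : Continuous fun y : ℝ => β y A := hβc.comp (continuous_id.prodMk continuous_const)
    exact continuous_const.sub this
  have h := intervalIntegral.integral_hasDerivAt_right
    (hf.intervalIntegrable 0 x) (hf.stronglyMeasurableAtFilter _ _) hf.continuousAt
  exact h.const_mul (1 / ρ)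

lemma uExp_continuous (hρ : 0 < ρ) (hβc : Continuous fun p : ℝ × ℝ => β p.1 p.2) (A : ℝ) :
    Continuous (uExp ρ b β A) :=
  continuous_iff_continuousAt.2 fun x =>
    (uExp_hasDerivAt hρ hβc A x).differentiableAt.continuousAt

lemma uExp_zero (ρ b : ℝ) (β : ℝ → ℝ → ℝ) (A : ℝ) : uExp ρ b β A 0 = 0 := by
  simp [uExp]

lemma uExp_eq_Gin (hρ : 0 < ρ) (hβc : Continuous fun p : ℝ × ℝ => β p.1 p.2) (A x : ℝ) :
    uExp ρ b β A x = uExp ρ b β A 1 + Gin ρ b β A x := by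
  have hf : Continuous fun y => b - β y A := by
    have : Continuous fun y : ℝ => β y A := hβc.comp (continuous_id.prodMk continuous_const)
    exact continuous_const.sub this
  have hadd : (∫ y in (0:ℝ)..1, (b - β y A)) + (∫ y in (1:ℝ)..x, (b - β y A))
      = ∫ y in (0:ℝ)..x, (b - β y A) :=
    intervalIntegral.integral_add_adjacent_intervals (hf.intervalIntegrable 0 1)
      (hf.intervalIntegrable 1 x)
  have hsymm : (∫ y in (1:ℝ)..x, (b - β y A)) = ∫ y in x..(1:ℝ), (β y A - b) := by
    rw [intervalIntegral.integral_symm]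
    rw [← intervalIntegral.integral_neg]
    congr 1; ext y; ring
  simp only [uExp, Gin]
  rw [← hadd, hsymm]; ring

lemma key_identity (hρ : 0 < ρ) (hβc : Continuous fun p : ℝ × ℝ => β p.1 p.2) (A : ℝ) :
    Ffun ρ b β A - ρ = Real.exp (uExp ρ b β A 1) * (b * Gfun ρ b β A - ρ) := by
  have hβA : Continuous fun y : ℝ => β y A := hβc.comp (continuous_id.prodMk continuous_const)
  have hu := uExp_continuous (b := b) hρ hβc A
  have hE : ∀ x : ℝ, HasDerivAt (fun t => Real.exp (uExp ρ b β A t))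
      (Real.exp (uExp ρ b β A x) * ((1 / ρ) * (b - β x A))) x :=
    fun x => (uExp_hasDerivAt hρ hβc A x).exp
  have hcontE : Continuous fun x => Real.exp (uExp ρ b β A x) * ((1 / ρ) * (b - β x A)) :=
    (hu.rexp).mul (continuous_const.mul (continuous_const.sub hβA))
  have hFTC : (∫ x in (0:ℝ)..1, Real.exp (uExp ρ b β A x) * ((1 / ρ) * (b - β x A)))
      = Real.exp (uExp ρ b β A 1) - Real.exp (uExp ρ b β A 0) :=
    intervalIntegral.integral_eq_sub_of_hasDerivAt (fun x _ => hE x)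
      (hcontE.intervalIntegrable 0 1)
  rw [uExp_zero, Real.exp_zero] at hFTC
  have h1 : (∫ x in (0:ℝ)..1, (b - β x A) * Real.exp (uExp ρ b β A x))
      = ρ * (Real.exp (uExp ρ b β A 1) - 1) := by
    rw [← hFTC, ← intervalIntegral.integral_const_mul]
    apply intervalIntegral.integral_congr
    intro x _
    field_simp
  have hint1 : IntervalIntegrable (fun x => b * Real.exp (uExp ρ b β A x))
      MeasureTheory.volume 0 1 :=
    (continuous_const.mul hu.rexp).intervalIntegrable 0 1
  have hint2 : IntervalIntegrable (fun x => β x A * Real.exp (uExp ρ b β A x))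
      MeasureTheory.volume 0 1 :=
    (hβA.mul hu.rexp).intervalIntegrable 0 1
  have h2 : (∫ x in (0:ℝ)..1, (b - β x A) * Real.exp (uExp ρ b β A x))
      = b * Hfun ρ b β A - Ffun ρ b β A := by
    simp only [sub_mul]
    rw [intervalIntegral.integral_sub hint1 hint2, Ffun, Hfun,
      intervalIntegral.integral_const_mul]
  have h3 : Hfun ρ b β A = Real.exp (uExp ρ b β A 1) * Gfun ρ b β A := by
    rw [Hfun, Gfun, ← intervalIntegral.integral_const_mul]
    apply intervalIntegral.integral_congr
    intro x _
    show Real.exp (uExp ρ b β A x) = Real.exp (uExp ρ b β A 1) * Real.exp (Gin ρ b β A x)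
    rw [uExp_eq_Gin hρ hβc A x, Real.exp_add]
  have := h1.symm.trans h2
  rw [h3] at this
  nlinarith [this]

lemma Gin_continuous (hβc : Continuous fun p : ℝ × ℝ => β p.1 p.2) :
    Continuous fun p : ℝ × ℝ => Gin ρ b β p.1 p.2 := by
  have huncurry : Continuous (Function.uncurry fun (A y : ℝ) => β y A - b) := by
    have h : Continuous fun p : ℝ × ℝ => β p.2 p.1 - b :=
      (hβc.comp (continuous_snd.prodMk continuous_fst)).sub continuous_const
    exact h
  have hprim : Continuous fun p : ℝ × ℝ => ∫ y in (0:ℝ)..p.2, (β y p.1 - b) :=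
    intervalIntegral.continuous_parametric_primitive_of_continuous huncurry
  have hfull1 : Continuous fun A : ℝ => ∫ y in (0:ℝ)..1, (β y A - b) :=
    intervalIntegral.continuous_parametric_intervalIntegral_of_continuous'
      (μ := MeasureTheory.volume) huncurry 0 1
  have hfull : Continuous fun p : ℝ × ℝ => ∫ y in (0:ℝ)..1, (β y p.1 - b) :=
    hfull1.comp continuous_fst
  have heq : ∀ p : ℝ × ℝ, Gin ρ b β p.1 p.2 =
      (1 / ρ) * ((∫ y in (0:ℝ)..1, (β y p.1 - b)) - ∫ y in (0:ℝ)..p.2, (β y p.1 - b)) := by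
    intro p
    have hf : Continuous fun y => β y p.1 - b :=
      (hβc.comp (continuous_id.prodMk continuous_const)).sub continuous_const
    have : (∫ y in (0:ℝ)..p.2, (β y p.1 - b)) + (∫ y in p.2..(1:ℝ), (β y p.1 - b))
        = ∫ y in (0:ℝ)..1, (β y p.1 - b) :=
      intervalIntegral.integral_add_adjacent_intervals
        (hf.intervalIntegrable 0 p.2) (hf.intervalIntegrable p.2 1)
    rw [Gin]; rw [← this]; ring
  rw [show (fun p : ℝ × ℝ => Gin ρ b β p.1 p.2) = fun p : ℝ × ℝ =>
      (1 / ρ) * ((∫ y in (0:ℝ)..1, (β y p.1 - b)) - ∫ y in (0:ℝ)..p.2, (β y p.1 - b))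
    from funext heq]
  exact continuous_const.mul (hfull.sub hprim)

lemma Gfun_continuous (hβc : Continuous fun p : ℝ × ℝ => β p.1 p.2) :
    Continuous (Gfun ρ b β) := by
  have huncurry : Continuous (Function.uncurry fun (A x : ℝ) => Real.exp (Gin ρ b β A x)) := by
    have : Continuous fun p : ℝ × ℝ => Real.exp (Gin ρ b β p.1 p.2) := (Gin_continuous hβc).rexp
    exact this
  exact intervalIntegral.continuous_parametric_intervalIntegral_of_continuous huncurry
    continuous_const

lemma Gfun_strictAnti (hρ : 0 < ρ) (hβc : Continuous fun p : ℝ × ℝ => β p.1 p.2)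
    (hanti : ∀ y : ℝ, ∀ A₁ A₂ : ℝ, 0 ≤ A₁ → A₁ < A₂ → β y A₂ < β y A₁) :
    StrictAntiOn (Gfun ρ b β) (Set.Ici 0) := by
  intro A₁ hA₁ A₂ hA₂ h12
  have hβ1 : Continuous fun y : ℝ => β y A₁ := hβc.comp (continuous_id.prodMk continuous_const)
  have hβ2 : Continuous fun y : ℝ => β y A₂ := hβc.comp (continuous_id.prodMk continuous_const)
  have hGinU : Continuous (Function.uncurry (Gin ρ b β)) := Gin_continuous hβc
  have hGin1 : Continuous (Gin ρ b β A₁) := hGinU.uncurry_left A₁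
  have hGin2 : Continuous (Gin ρ b β A₂) := hGinU.uncurry_left A₂
  have hle : ∀ x ∈ Set.Ioc (0:ℝ) 1, Real.exp (Gin ρ b β A₂ x) ≤ Real.exp (Gin ρ b β A₁ x) := by
    intro x hx
    apply Real.exp_le_exp.2
    apply mul_le_mul_of_nonneg_left _ (le_of_lt (by positivity : (0:ℝ) < 1/ρ))
    apply intervalIntegral.integral_mono_on hx.2
      ((hβ2.sub continuous_const).intervalIntegrable x 1)
      ((hβ1.sub continuous_const).intervalIntegrable x 1)
    intro y _
    exact sub_le_sub_right (le_of_lt (hanti y A₁ A₂ hA₁ h12)) b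
  have hlt0 : Real.exp (Gin ρ b β A₂ 0) < Real.exp (Gin ρ b β A₁ 0) := by
    apply Real.exp_lt_exp.2
    apply (mul_lt_mul_iff_right₀ (by positivity : (0:ℝ) < 1/ρ)).2
    apply intervalIntegral.integral_lt_integral_of_continuousOn_of_le_of_exists_lt one_pos
      (hβ2.sub continuous_const).continuousOn (hβ1.sub continuous_const).continuousOn
    · intro y _; exact sub_le_sub_right (le_of_lt (hanti y A₁ A₂ hA₁ h12)) b
    · exact ⟨0, ⟨le_refl 0, zero_le_one⟩, sub_lt_sub_right (hanti 0 A₁ A₂ hA₁ h12) b⟩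
  exact intervalIntegral.integral_lt_integral_of_continuousOn_of_le_of_exists_lt one_pos
    (hGin2.rexp).continuousOn (hGin1.rexp).continuousOn hle
    ⟨0, ⟨le_refl 0, zero_le_one⟩, hlt0⟩

lemma Gfun_eventually_lt (hρ : 0 < ρ) (hb : 0 < b) (M : ℝ)
    (hβc : Continuous fun p : ℝ × ℝ => β p.1 p.2)
    (hβpos : ∀ y A : ℝ, 0 < β y A) (hβM : ∀ y A : ℝ, β y A ≤ M)
    (hβlim : ∀ y : ℝ, Tendsto (fun A => β y A) atTop (nhds 0)) :
    ∀ᶠ A in atTop, Gfun ρ b β A < ρ / b := by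
  set J : ℝ → ℝ := fun A => ∫ y in (0:ℝ)..1, β y A with hJdef
  have hβA : ∀ A : ℝ, Continuous fun y : ℝ => β y A := fun A =>
    hβc.comp (continuous_id.prodMk continuous_const)
  have hJ : Tendsto J atTop (nhds 0) := by
    have h0 : ∀ A, J A = ∫ y in Set.Ioc (0:ℝ) 1, β y A := fun A =>
      intervalIntegral.integral_of_le zero_le_one
    have hmain : Tendsto (fun A => ∫ y in Set.Ioc (0:ℝ) 1, β y A) atTop
        (nhds (∫ y in Set.Ioc (0:ℝ) 1, (0:ℝ))) := by
      apply MeasureTheory.tendsto_integral_filter_of_dominated_convergence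
        (bound := fun _ => M)
      · exact Filter.Eventually.of_forall fun A =>
          ((hβA A).aestronglyMeasurable).restrict
      · refine Filter.Eventually.of_forall fun A => ?_
        refine Filter.Eventually.of_forall fun y => ?_
        rw [Real.norm_eq_abs, abs_of_pos (hβpos y A)]
        exact hβM y A
      · exact MeasureTheory.integrable_const M
      · exact Filter.Eventually.of_forall fun y => hβlim y
    simp only [MeasureTheory.integral_zero] at hmain
    rw [show J = fun A => ∫ y in Set.Ioc (0:ℝ) 1, β y A from funext h0]
    exact hmain
  set K : ℝ := ∫ x in (0:ℝ)..1, Real.exp ((b/ρ) * x - b/ρ) with hKdef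
  have hKFTC : ∀ x : ℝ, HasDerivAt (fun t => (ρ/b) * Real.exp ((b/ρ) * t - b/ρ))
      (Real.exp ((b/ρ) * x - b/ρ)) x := by
    intro x
    have h1 : HasDerivAt (fun t : ℝ => (b/ρ) * t - b/ρ) (b/ρ) x := by
      simpa using ((hasDerivAt_id x).const_mul (b/ρ)).sub_const (b/ρ)
    have h2 := (h1.exp).const_mul (ρ/b)
    have hρb : ρ / b * (b / ρ) = 1 := by
      rw [div_mul_div_comm, mul_comm ρ b, div_self (by positivity)]
    refine h2.congr_deriv ?_
    rw [mul_comm (Real.exp _) (b/ρ), ← mul_assoc, hρb, one_mul]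
  have hK : K = ρ/b - (ρ/b) * Real.exp (-(b/ρ)) := by
    have := intervalIntegral.integral_eq_sub_of_hasDerivAt (fun x _ => hKFTC x)
      ((Real.continuous_exp.comp ((continuous_const.mul continuous_id).sub
        continuous_const)).intervalIntegrable 0 1)
    rw [hKdef, this]
    norm_num
  have hKlt : K < ρ/b := by
    rw [hK]
    have : 0 < (ρ/b) * Real.exp (-(b/ρ)) := by positivity
    linarith
  have hbound : ∀ A : ℝ, Gfun ρ b β A ≤ Real.exp (J A / ρ) * K := by
    intro A
    have hGinU : Continuous (Function.uncurry (Gin ρ b β)) := Gin_continuous hβc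
    have hGinA : Continuous (Gin ρ b β A) := hGinU.uncurry_left A
    have hpt : ∀ x ∈ Set.Icc (0:ℝ) 1,
        Real.exp (Gin ρ b β A x) ≤ Real.exp (J A / ρ) * Real.exp ((b/ρ) * x - b/ρ) := by
      intro x hx
      rw [← Real.exp_add]
      apply Real.exp_le_exp.2
      have hsplit : (∫ y in x..(1:ℝ), (β y A - b))
          = (∫ y in x..(1:ℝ), β y A) - (1 - x) * b := by
        rw [intervalIntegral.integral_sub ((hβA A).intervalIntegrable x 1)
          (continuous_const.intervalIntegrable x 1), intervalIntegral.integral_const]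
        norm_num
      have hJsplit : (∫ y in (0:ℝ)..x, β y A) + (∫ y in x..(1:ℝ), β y A) = J A :=
        intervalIntegral.integral_add_adjacent_intervals ((hβA A).intervalIntegrable 0 x)
          ((hβA A).intervalIntegrable x 1)
      have hnn : 0 ≤ ∫ y in (0:ℝ)..x, β y A :=
        intervalIntegral.integral_nonneg hx.1 (fun y _ => (hβpos y A).le)
      have htail : (∫ y in x..(1:ℝ), β y A) ≤ J A := by linarith
      have hGle : Gin ρ b β A x ≤ (1/ρ) * (J A - (1-x) * b) := by
        rw [Gin, hsplit]
        apply mul_le_mul_of_nonneg_left _ (by positivity : (0:ℝ) ≤ 1/ρ)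
        linarith
      calc Gin ρ b β A x ≤ (1/ρ) * (J A - (1-x)*b) := hGle
        _ = J A / ρ + ((b/ρ) * x - b/ρ) := by field_simp; ring
    have hmono : Gfun ρ b β A
        ≤ ∫ x in (0:ℝ)..1, Real.exp (J A / ρ) * Real.exp ((b/ρ) * x - b/ρ) := by
      apply intervalIntegral.integral_mono_on zero_le_one
        ((hGinA.rexp).intervalIntegrable 0 1)
        ((continuous_const.mul (Real.continuous_exp.comp ((continuous_const.mul
          continuous_id).sub continuous_const))).intervalIntegrable 0 1)
      exact hpt
    rwa [intervalIntegral.integral_const_mul] at hmono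
  have htend : Tendsto (fun A => Real.exp (J A / ρ) * K) atTop (nhds K) := by
    have h1 : Tendsto (fun A => J A / ρ) atTop (nhds 0) := by
      simpa using hJ.div_const ρ
    have h2 : Tendsto (fun A => Real.exp (J A / ρ)) atTop (nhds 1) := by
      have := (Real.continuous_exp.tendsto 0).comp h1
      simpa [Function.comp_def] using this
    simpa using h2.mul_const K
  have hev : ∀ᶠ A in atTop, Real.exp (J A / ρ) * K < ρ/b :=
    htend.eventually_lt_const hKlt
  filter_upwards [hev] with A hA
  exact lt_of_le_of_lt (hbound A) hA

lemma Hfun_pos (hρ : 0 < ρ) (hβc : Continuous fun p : ℝ × ℝ => β p.1 p.2) (A : ℝ) :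
    0 < Hfun ρ b β A := by
  have hu := uExp_continuous (b := b) hρ hβc A
  apply intervalIntegral.intervalIntegral_pos_of_pos_on (hu.rexp.intervalIntegrable 0 1)
    (fun x _ => Real.exp_pos _) one_pos

end aux
theorem stmt2 (ρ b : ℝ) (hρ : 0 < ρ) (hb : 0 < b)
    (ω : ℝ → ℝ) (α : ℝ → ℝ → ℝ)
    (hωc : ContinuousOn ω (Set.Ici 0))
    (hωpos : ∀ A ∈ Set.Ici (0 : ℝ), 0 < ω A)
    (hωbdd : BddAbove (ω '' Set.Ici 0))
    (hωanti : StrictAntiOn ω (Set.Ici 0))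
    (hωlim : Filter.Tendsto ω Filter.atTop (nhds 0))
    (hαc : ContinuousOn (fun p : ℝ × ℝ => α p.1 p.2) (Set.Icc 0 1 ×ˢ Set.Ici 0))
    (hαpos : ∀ x ∈ Set.Icc (0 : ℝ) 1, ∀ A ∈ Set.Ici (0 : ℝ), 0 < α x A)
    (hαbdd : ∃ M : ℝ, ∀ x ∈ Set.Icc (0 : ℝ) 1, ∀ A ∈ Set.Ici (0 : ℝ), α x A ≤ M)
    (hαanti : ∀ x ∈ Set.Icc (0 : ℝ) 1, StrictAntiOn (α x) (Set.Ici 0))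
    (hαlim : ∀ x ∈ Set.Icc (0 : ℝ) 1, Filter.Tendsto (α x) Filter.atTop (nhds 0)) :
    ((∃ A Ω0 : ℝ, IsNonzeroSteadyState3 ρ b α ω A Ω0) ↔
        (∫ x in (0 : ℝ)..1, α x 0 * Real.exp (uExp ρ b α 0 x)) > ρ) ∧
    ((∫ x in (0 : ℝ)..1, α x 0 * Real.exp (uExp ρ b α 0 x)) > ρ ↔
        (∫ x in (0 : ℝ)..1,
          Real.exp ((1 / ρ) * ∫ y in x..(1 : ℝ), (α y 0 - b))) > ρ / b) ∧
    (∀ A₁ Ω₁ A₂ Ω₂ : ℝ, IsNonzeroSteadyState3 ρ b α ω A₁ Ω₁ →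
        IsNonzeroSteadyState3 ρ b α ω A₂ Ω₂ → A₁ = A₂ ∧ Ω₁ = Ω₂) := by
  obtain ⟨M, hM⟩ := hαbdd
  set β : ℝ → ℝ → ℝ := fun y A => α (max 0 (min y 1)) (max A 0) with hβdef
  have hclampmem : ∀ y : ℝ, max 0 (min y 1) ∈ Set.Icc (0:ℝ) 1 := fun y =>
    ⟨le_max_left _ _, max_le zero_le_one (min_le_right _ _)⟩
  have hmaxmem : ∀ A : ℝ, max A 0 ∈ Set.Ici (0:ℝ) := fun A => Set.mem_Ici.2 (le_max_right _ _)
  have hβc : Continuous fun p : ℝ × ℝ => β p.1 p.2 := by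
    have hmap : Continuous fun p : ℝ × ℝ => ((max 0 (min p.1 1), max p.2 0) : ℝ × ℝ) := by
      fun_prop
    exact hαc.comp_continuous hmap (fun p => ⟨hclampmem p.1, hmaxmem p.2⟩)
  have hβpos : ∀ y A : ℝ, 0 < β y A := fun y A => hαpos _ (hclampmem y) _ (hmaxmem A)
  have hβM : ∀ y A : ℝ, β y A ≤ M := fun y A => hM _ (hclampmem y) _ (hmaxmem A)
  have hβeq : ∀ y ∈ Set.Icc (0:ℝ) 1, ∀ A ∈ Set.Ici (0:ℝ), β y A = α y A := by
    intro y hy A hA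
    simp only [hβdef]
    rw [min_eq_left hy.2, max_eq_right hy.1, max_eq_left hA]
  have hβanti : ∀ y : ℝ, ∀ A₁ A₂ : ℝ, 0 ≤ A₁ → A₁ < A₂ → β y A₂ < β y A₁ := by
    intro y A₁ A₂ h0 h12
    have e1 : max A₁ 0 = A₁ := max_eq_left h0
    have e2 : max A₂ 0 = A₂ := max_eq_left (h0.trans h12.le)
    simp only [hβdef, e1, e2]
    exact hαanti _ (hclampmem y) h0 (h0.trans h12.le) h12
  have hβlim : ∀ y : ℝ, Filter.Tendsto (fun A => β y A) Filter.atTop (nhds 0) := by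
    intro y
    apply (hαlim _ (hclampmem y)).congr'
    filter_upwards [Filter.eventually_ge_atTop (0:ℝ)] with A hA
    simp only [hβdef, max_eq_left hA]
  -- transfer lemmas
  have huE : ∀ A ∈ Set.Ici (0:ℝ), ∀ x ∈ Set.Icc (0:ℝ) 1,
      uExp ρ b α A x = uExp ρ b β A x := by
    intro A hA x hx
    unfold uExp
    congr 1
    apply intervalIntegral.integral_congr
    intro y hy
    rw [Set.uIcc_of_le hx.1] at hy
    show b - α y A = b - β y A
    rw [hβeq y ⟨hy.1, hy.2.trans hx.2⟩ A hA]
  have hFeq : ∀ A ∈ Set.Ici (0:ℝ),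
      (∫ x in (0:ℝ)..1, α x A * Real.exp (uExp ρ b α A x)) = Ffun ρ b β A := by
    intro A hA
    rw [Ffun]
    apply intervalIntegral.integral_congr
    intro x hx
    rw [Set.uIcc_of_le zero_le_one] at hx
    simp only
    rw [hβeq x hx A hA, huE A hA x hx]
  have hHeq : ∀ A ∈ Set.Ici (0:ℝ),
      (∫ x in (0:ℝ)..1, Real.exp (uExp ρ b α A x)) = Hfun ρ b β A := by
    intro A hA
    rw [Hfun]
    apply intervalIntegral.integral_congr
    intro x hx
    rw [Set.uIcc_of_le zero_le_one] at hx
    simp only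
    rw [huE A hA x hx]
  have hGeq : (∫ x in (0:ℝ)..1, Real.exp ((1 / ρ) * ∫ y in x..(1:ℝ), (α y 0 - b)))
      = Gfun ρ b β 0 := by
    rw [Gfun]
    apply intervalIntegral.integral_congr
    intro x hx
    rw [Set.uIcc_of_le zero_le_one] at hx
    simp only [Gin]
    congr 2
    apply intervalIntegral.integral_congr
    intro y hy
    rw [Set.uIcc_of_le hx.2] at hy
    show α y 0 - b = β y 0 - b
    rw [hβeq y ⟨hx.1.trans hy.1, hy.2⟩ 0 Set.self_mem_Ici]
  -- main analytic facts
  have hGcont := Gfun_continuous (ρ := ρ) (b := b) hβc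
  have hGanti := Gfun_strictAnti (b := b) hρ hβc hβanti
  have hGev := Gfun_eventually_lt hρ hb M hβc hβpos hβM hβlim
  have hFGgt : ∀ A : ℝ, ρ < Ffun ρ b β A ↔ ρ / b < Gfun ρ b β A := by
    intro A
    have hk := key_identity (b := b) hρ hβc A
    have he := Real.exp_pos (uExp ρ b β A 1)
    rw [div_lt_iff₀ hb]
    constructor
    · intro h; nlinarith
    · intro h; nlinarith
  have hFGeq : ∀ A : ℝ, Ffun ρ b β A = ρ ↔ Gfun ρ b β A = ρ / b := by
    intro A
    have hk := key_identity (b := b) hρ hβc A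
    have he := Real.exp_pos (uExp ρ b β A 1)
    constructor
    · intro h
      rw [h, sub_self] at hk
      have h2 : b * Gfun ρ b β A - ρ = 0 := by
        rcases mul_eq_zero.1 hk.symm with h' | h'
        · exact absurd h' he.ne'
        · exact h'
      field_simp
      linarith
    · intro h
      rw [h] at hk
      have : b * (ρ / b) - ρ = 0 := by field_simp; ring
      rw [this, mul_zero] at hk
      linarith
  -- the Ω0 solver, given A with F(A) = ρ
  have hΩsolve : ∀ A : ℝ, 0 < A → Ffun ρ b β A = ρ →
      ∃ Ω0 : ℝ, IsNonzeroSteadyState3 ρ b α ω A Ω0 := by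
    intro A hA hFA
    set I : ℝ := Hfun ρ b β A with hIdef
    have hIpos : 0 < I := Hfun_pos hρ hβc A
    obtain ⟨C, hC⟩ := hωbdd
    have hCb : ∀ t : ℝ, 0 ≤ t → ω t ≤ C := fun t ht => hC ⟨t, Set.mem_Ici.2 ht, rfl⟩
    have hCpos : 0 < C := lt_of_lt_of_le (hωpos 0 Set.self_mem_Ici) (hCb 0 (le_refl 0))
    set T : ℝ := C * A / ρ + 1 with hTdef
    have hT0 : 0 ≤ T := by positivity
    set φ : ℝ → ℝ := fun t => ρ * t - ω (t * I) * A with hφdef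
    have hφc : ContinuousOn φ (Set.Icc 0 T) := by
      apply ContinuousOn.sub (Continuous.continuousOn (by fun_prop))
      apply ContinuousOn.mul _ continuousOn_const
      apply hωc.comp ((continuous_mul_right I).continuousOn)
      intro t ht
      exact mul_nonneg ht.1 hIpos.le
    have hφ0 : φ 0 < 0 := by
      have : ω (0 * I) = ω 0 := by norm_num
      simp only [hφdef, mul_zero, zero_sub, this]
      have := hωpos 0 Set.self_mem_Ici
      nlinarith
    have hφT : 0 < φ T := by
      have h1 : ω (T * I) ≤ C := hCb _ (mul_nonneg hT0 hIpos.le)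
      have h2 : ω (T * I) * A ≤ C * A := mul_le_mul_of_nonneg_right h1 hA.le
      have h3 : ρ * T = C * A + ρ := by
        rw [hTdef]; field_simp
      simp only [hφdef]
      rw [h3]
      linarith
    have hIVT : (0:ℝ) ∈ φ '' Set.Icc 0 T :=
      intermediate_value_Icc hT0 hφc ⟨hφ0.le, hφT.le⟩
    obtain ⟨Ω0, hΩmem, hΩval⟩ := hIVT
    have hΩpos : 0 < Ω0 := by
      rcases eq_or_lt_of_le hΩmem.1 with h | h
      · exfalso; rw [← h] at hΩval; rw [hΩval] at hφ0; exact lt_irrefl 0 hφ0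
      · exact h
    refine ⟨Ω0, hA, hΩpos, ?_, ?_⟩
    · rw [hFeq A (Set.mem_Ici.2 hA.le)]; exact hFA.symm
    · rw [hHeq A (Set.mem_Ici.2 hA.le), ← hIdef]
      have : ρ * Ω0 - ω (Ω0 * I) * A = 0 := hΩval
      linarith
  -- forward direction: steady state implies F(0) > ρ
  have hfwd : (∃ A Ω0 : ℝ, IsNonzeroSteadyState3 ρ b α ω A Ω0) →
      ρ < Ffun ρ b β 0 := by
    rintro ⟨A, Ω0, hA, hΩ0, h3, h4⟩
    have hFA : Ffun ρ b β A = ρ := by rw [← hFeq A (Set.mem_Ici.2 hA.le)]; exact h3.symm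
    have hGA : Gfun ρ b β A = ρ / b := (hFGeq A).1 hFA
    have hG0 : ρ / b < Gfun ρ b β 0 := by
      rw [← hGA]
      exact hGanti Set.self_mem_Ici (Set.mem_Ici.2 hA.le) hA
    exact (hFGgt 0).2 hG0
  -- backward direction: F(0) > ρ implies existence
  have hbwd : ρ < Ffun ρ b β 0 → ∃ A Ω0 : ℝ, IsNonzeroSteadyState3 ρ b α ω A Ω0 := by
    intro hF0
    have hG0 : ρ / b < Gfun ρ b β 0 := (hFGgt 0).1 hF0
    obtain ⟨A₁, hA₁lt, hA₁0⟩ := (hGev.and (Filter.eventually_ge_atTop (0:ℝ))).exists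
    have hIVT : (ρ / b) ∈ Gfun ρ b β '' Set.Icc 0 A₁ :=
      intermediate_value_Icc' hA₁0 hGcont.continuousOn ⟨hA₁lt.le, hG0.le⟩
    obtain ⟨A, hAmem, hGA⟩ := hIVT
    have hApos : 0 < A := by
      rcases eq_or_lt_of_le hAmem.1 with h | h
      · exfalso; rw [← h] at hGA; rw [hGA] at hG0; exact lt_irrefl _ hG0
      · exact h
    obtain ⟨Ω0, hss⟩ := hΩsolve A hApos ((hFGeq A).2 hGA)
    exact ⟨A, Ω0, hss⟩
  have hmain : (∃ A Ω0 : ℝ, IsNonzeroSteadyState3 ρ b α ω A Ω0) ↔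
      (∫ x in (0 : ℝ)..1, α x 0 * Real.exp (uExp ρ b α 0 x)) > ρ := by
    rw [hFeq 0 Set.self_mem_Ici]
    exact ⟨hfwd, hbwd⟩
  refine ⟨hmain, ?_, ?_⟩
  · rw [hFeq 0 Set.self_mem_Ici, hGeq]
    exact hFGgt 0
  · rintro A₁ Ω₁ A₂ Ω₂ ⟨hA₁, hΩ₁, h₁3, h₁4⟩ ⟨hA₂, hΩ₂, h₂3, h₂4⟩
    have hFA₁ : Ffun ρ b β A₁ = ρ := by rw [← hFeq A₁ (Set.mem_Ici.2 hA₁.le)]; exact h₁3.symm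
    have hFA₂ : Ffun ρ b β A₂ = ρ := by rw [← hFeq A₂ (Set.mem_Ici.2 hA₂.le)]; exact h₂3.symm
    have hGA₁ : Gfun ρ b β A₁ = ρ / b := (hFGeq A₁).1 hFA₁
    have hGA₂ : Gfun ρ b β A₂ = ρ / b := (hFGeq A₂).1 hFA₂
    have hAeq : A₁ = A₂ := hGanti.injOn (Set.mem_Ici.2 hA₁.le) (Set.mem_Ici.2 hA₂.le) (hGA₁.trans hGA₂.symm)
    subst hAeq
    refine ⟨rfl, ?_⟩
    set I : ℝ := Hfun ρ b β A₁ with hIdef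
    have hIpos : 0 < I := Hfun_pos hρ hβc A₁
    rw [hHeq A₁ (Set.mem_Ici.2 hA₁.le), ← hIdef] at h₁4 h₂4
    by_contra hne
    rcases lt_or_gt_of_ne hne with h | h
    · have hlt : ω (Ω₂ * I) < ω (Ω₁ * I) :=
        hωanti (Set.mem_Ici.2 (mul_nonneg hΩ₁.le hIpos.le)) (Set.mem_Ici.2 (mul_nonneg hΩ₂.le hIpos.le))
          (mul_lt_mul_of_pos_right h hIpos)
      nlinarith
    · have hlt : ω (Ω₁ * I) < ω (Ω₂ * I) :=
        hωanti (Set.mem_Ici.2 (mul_nonneg hΩ₂.le hIpos.le)) (Set.mem_Ici.2 (mul_nonneg hΩ₁.le hIpos.le))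
          (mul_lt_mul_of_pos_right h hIpos)
      nlinarith
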